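/- arXiv:2303.09009 — 3 statements merged into one kernel-verified Lean document; each statement's English description precedes it below -/
import Mathlib

section
/- Let F : ℝ^n → ℝ be differentiable with F ∈ S_{μ, L_F} for some μ > 0, let N be a real n×n skew-symmetric matrix and B a real n×n matrix with N = B^sym − 2B where B^sym = B + Bᵀ, L_{B^sym} = ‖B^sym‖ the spectral norm, and let x* satisfy ∇F(x*) + N x* = 0. If 0 < α < 1/max{2L_{B^sym}, 2L_F}, then the Lyapunov function E^{αBD}(x) := (1/2)‖x − x*‖²_{I − αB^sym} − α D_F(x*, x) satisfies E^{αBD}(x) ≥ 0 for all x, and E^{αBD}(x) = 0 if and only if x = x*. -/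
open Matrix RealInnerProductSpace

/-- The spectral norm (ℓ²-operator norm) of a real square matrix. -/
noncomputable def specNorm {n : ℕ} (M : Matrix (Fin n) (Fin n) ℝ) : ℝ :=
  ‖Matrix.toEuclideanCLM (𝕜 := ℝ) M‖

/-- The continuous linear functional `v ↦ ⟨z, v⟩` on `ℝⁿ` (used to express that
`z` is the gradient of a function at a point, via `HasFDerivAt`). -/
noncomputable def dpCLM {m : ℕ} (z : Fin m → ℝ) : (Fin m → ℝ) →L[ℝ] ℝ :=
  LinearMap.toContinuousLinearMap
    { toFun := fun v => z ⬝ᵥ v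
      map_add' := fun a b => by simp [dotProduct_add]
      map_smul' := fun c a => by simp [dotProduct_smul] }

lemma abs_dot_mulVec_le {n : ℕ} (M : Matrix (Fin n) (Fin n) ℝ) (v : Fin n → ℝ) :
    |v ⬝ᵥ M.mulVec v| ≤ specNorm M * (v ⬝ᵥ v) := by
  set u : EuclideanSpace ℝ (Fin n) := (WithLp.equiv 2 (Fin n → ℝ)).symm v with hu
  have h1 : v ⬝ᵥ M.mulVec v = ⟪u, Matrix.toEuclideanCLM (𝕜 := ℝ) M u⟫ := by
    rw [hu, WithLp.equiv_symm_apply, Matrix.toEuclideanCLM_toLp]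
    simp [PiLp.inner_apply, dotProduct, PiLp.toLp_apply, mul_comm]
  have h2 : v ⬝ᵥ v = ‖u‖ ^ 2 := by
    rw [← real_inner_self_eq_norm_sq, hu]
    rw [WithLp.equiv_symm_apply, PiLp.inner_apply]
    simp [dotProduct, PiLp.toLp_apply, sq]
  rw [h1, h2]
  calc |⟪u, Matrix.toEuclideanCLM (𝕜 := ℝ) M u⟫|
      ≤ ‖u‖ * ‖Matrix.toEuclideanCLM (𝕜 := ℝ) M u‖ := abs_real_inner_le_norm _ _
    _ ≤ ‖u‖ * (specNorm M * ‖u‖) :=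
        mul_le_mul_of_nonneg_left ((Matrix.toEuclideanCLM (𝕜 := ℝ) M).le_opNorm u) (norm_nonneg u)
    _ = specNorm M * ‖u‖ ^ 2 := by ring


/-- **Nonnegativity and definiteness of the GSS Lyapunov function.**
Let `F ∈ S_{μ,L_F}` (`μ > 0`) be differentiable with gradient `∇F`, `N = Bˢʸᵐ - 2B`
skew-symmetric with `Bˢʸᵐ = B + Bᵀ`, and `∇F(x*) + N x* = 0`.  For
`0 < α < 1/max{2‖Bˢʸᵐ‖, 2L_F}` the Lyapunov function
`E(x) = ½‖x - x*‖²_{I - αBˢʸᵐ} - α D_F(x*, x)` satisfies `E(x) ≥ 0`, with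
`E(x) = 0` iff `x = x*`. -/
theorem gss_lyapunov_nonneg
    {n : ℕ} (μ LF α : ℝ) (hμ : 0 < μ)
    (F : (Fin n → ℝ) → ℝ) (gradF : (Fin n → ℝ) → (Fin n → ℝ))
    (hdiff : ∀ x, HasFDerivAt F (dpCLM (gradF x)) x)
    (hlower : ∀ x y : Fin n → ℝ,
      μ / 2 * ((x - y) ⬝ᵥ (x - y)) ≤ F x - F y - gradF y ⬝ᵥ (x - y))
    (hupper : ∀ x y : Fin n → ℝ,
      F x - F y - gradF y ⬝ᵥ (x - y) ≤ LF / 2 * ((x - y) ⬝ᵥ (x - y)))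
    (N B : Matrix (Fin n) (Fin n) ℝ)
    (hskew : Nᵀ = -N)
    (hNB : N = (B + Bᵀ) - (2 : ℝ) • B)
    (xs : Fin n → ℝ) (hxs : gradF xs + N.mulVec xs = 0)
    (hα0 : 0 < α)
    (hα1 : α < 1 / max (2 * specNorm (B + Bᵀ)) (2 * LF)) :
    (∀ x : Fin n → ℝ,
      0 ≤ (1 / 2) * ((x - xs) ⬝ᵥ ((1 - α • (B + Bᵀ)).mulVec (x - xs)))
            - α * (F xs - F x - gradF x ⬝ᵥ (xs - x))) ∧
    (∀ x : Fin n → ℝ,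
      ((1 / 2) * ((x - xs) ⬝ᵥ ((1 - α • (B + Bᵀ)).mulVec (x - xs)))
            - α * (F xs - F x - gradF x ⬝ᵥ (xs - x)) = 0) ↔ x = xs) := by
  set S := B + Bᵀ with hS
  set M := max (2 * specNorm S) (2 * LF) with hM
  have hM0 : 0 < M := by
    by_contra h
    push_neg at h
    have : 1 / M ≤ 0 := div_nonpos_of_nonneg_of_nonpos zero_le_one h
    linarith
  have hαM : α * M < 1 := by
    rw [one_div] at hα1
    calc α * M < M⁻¹ * M := by
          exact mul_lt_mul_of_pos_right hα1 hM0
      _ = 1 := inv_mul_cancel₀ hM0.ne'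
  have hαS : α * specNorm S < 1 / 2 := by
    have h1 : 2 * specNorm S ≤ M := le_max_left _ _
    nlinarith
  have hαL : α * LF < 1 / 2 := by
    have h1 : 2 * LF ≤ M := le_max_right _ _
    nlinarith
  have hc : 0 < 1 - α * specNorm S - α * LF := by linarith
  -- the key lower bound
  have key : ∀ x : Fin n → ℝ,
      (1 - α * specNorm S - α * LF) / 2 * ((x - xs) ⬝ᵥ (x - xs)) ≤
      (1 / 2) * ((x - xs) ⬝ᵥ ((1 - α • S).mulVec (x - xs)))
        - α * (F xs - F x - gradF x ⬝ᵥ (xs - x)) := by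
    intro x
    set v := x - xs with hv
    have hexp : v ⬝ᵥ ((1 - α • S).mulVec v) = v ⬝ᵥ v - α * (v ⬝ᵥ S.mulVec v) := by
      rw [sub_mulVec, dotProduct_sub, one_mulVec, smul_mulVec, dotProduct_smul]
      simp
    have hquad : v ⬝ᵥ S.mulVec v ≤ specNorm S * (v ⬝ᵥ v) :=
      le_of_abs_le (abs_dot_mulVec_le S v)
    have hD : F xs - F x - gradF x ⬝ᵥ (xs - x) ≤ LF / 2 * (v ⬝ᵥ v) := by
      have := hupper xs x
      have hvv : (xs - x) ⬝ᵥ (xs - x) = v ⬝ᵥ v := by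
        have : xs - x = -v := by rw [hv]; abel
        rw [this, neg_dotProduct, dotProduct_neg, neg_neg]
      rwa [hvv] at this
    have e1 : α * (F xs - F x - gradF x ⬝ᵥ (xs - x)) ≤ α * (LF / 2 * (v ⬝ᵥ v)) :=
      mul_le_mul_of_nonneg_left hD hα0.le
    have e2 : α / 2 * (v ⬝ᵥ S.mulVec v) ≤ α / 2 * (specNorm S * (v ⬝ᵥ v)) :=
      mul_le_mul_of_nonneg_left hquad (by positivity)
    rw [hexp]
    nlinarith [e1, e2]
  have hvv_nonneg : ∀ v : Fin n → ℝ, 0 ≤ v ⬝ᵥ v := fun v =>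
    Finset.sum_nonneg fun i _ => mul_self_nonneg (v i)
  constructor
  · intro x
    have := key x
    nlinarith [hvv_nonneg (x - xs)]
  · intro x
    constructor
    · intro hE
      have h1 := key x
      rw [hE] at h1
      have h2 : (x - xs) ⬝ᵥ (x - xs) ≤ 0 := by nlinarith
      have h3 : (x - xs) ⬝ᵥ (x - xs) = 0 := le_antisymm h2 (hvv_nonneg _)
      have h4 : x - xs = 0 := dotProduct_self_eq_zero.mp h3
      exact sub_eq_zero.mp h4
    · rintro rfl
      simp
end

section
/- (Inexact IMEX scheme.) Let F : ℝ^n → ℝ be differentiable with F ∈ S_{μ, L_F}, μ > 0, let N be a real n×n skew-symmetric matrix, and let x* satisfy ∇F(x*) + N x* = 0. Suppose the sequences satisfy (x̂_{k+1} − x_k)/α_k = y_k − x̂_{k+1}, (y_{k+1} − y_k)/α_k = x̂_{k+1} − y_{k+1} − (1/μ)(∇F(x̂_{k+1}) + N y_{k+1}) − ε_k/α_k, and (x_{k+1} − x_k)/α_k = y_{k+1} − (1/2)(x_{k+1} + x̂_{k+1}), where the residuals ε_k ∈ ℝ^n satisfy ‖ε_k‖² ≤ (α_k/2)(‖x̂_{k+1}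 − x_k‖² + α_k‖y_{k+1} − x̂_{k+1}‖²), and the step sizes satisfy α_k² L_F ≤ (1 + α_k/2) μ with α_k > 0. Then E_{k+1} ≤ (1 + α_k/2)^{−1} E_k for every k, where E_k = D_F(x_k, x*) + (μ/2)‖y_k − x*‖²; in particular for α_k = √(μ/L_F) one has E_k ≤ (1 + (1/2)√(μ/L_F))^{−k} E_0. -/
open Matrix

lemma dotSelfNonneg {m : ℕ} (v : Fin m → ℝ) : 0 ≤ v ⬝ᵥ v :=
  Finset.sum_nonneg fun _ _ => mul_self_nonneg _

lemma skewDotZero {m : ℕ} (N : Matrix (Fin m) (Fin m) ℝ) (hs : Nᵀ = -N) (z : Fin m → ℝ) :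
    (N.mulVec z) ⬝ᵥ z = 0 := by
  have h1 : z ᵥ* N = -(N *ᵥ z) := by rw [← Matrix.mulVec_transpose, hs, Matrix.neg_mulVec]
  have h2 : z ⬝ᵥ (N *ᵥ z) = (z ᵥ* N) ⬝ᵥ z := Matrix.dotProduct_mulVec z N z
  have h3 : (N *ᵥ z) ⬝ᵥ z = z ⬝ᵥ (N *ᵥ z) := dotProduct_comm _ _
  rw [h1, neg_dotProduct] at h2
  linarith

lemma aux_key (μ LF A : ℝ) (hμ : 0 < μ) (hA : 0 < A)
    (hstep : A^2*LF ≤ (1+A/2)*μ)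
    (F1 F2 F3 F4 aa ac cc bb ee ec uu ww wc pa2 ghpa ghu gsa gha gsp gsd hc : ℝ)
    (haa : 0 ≤ aa) (hww : 0 ≤ ww)
    (hbb : μ/2*bb = μ/2*cc - μ*wc + μ/2*ww)
    (hwc : μ*wc = A*μ*ac - A*μ*cc - A*hc - μ*ec)
    (hPA : (1+A/2)^2*pa2 = A^2*ww)
    (hI1 : (1+A/2)*(F1 - F4 - gsp) - (F2 - F4 - gsd)
      = (1+A/2)*(F1 - F3 - ghpa) - (F2 - F3 - ghu)
        + (A/2)*(F3 - F4 - gsa) + A*hc - A*(gha - gsa))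
    (hup : F1 - F3 - ghpa ≤ LF/2*pa2)
    (hlow1 : μ/2*uu ≤ F2 - F3 - ghu)
    (hlow2 : μ/2*aa ≤ F3 - F4 - gsa)
    (hlow3 : μ/2*aa ≤ F4 - F3 + gha)
    (hres : ee ≤ A/2*(uu + A*(aa - 2*ac + cc)))
    (hyoung : 0 ≤ μ/A*ee + μ*ec + A*μ/4*cc) :
    (1+A/2)*((F1 - F4 - gsp) + μ/2*cc) ≤ (F2 - F4 - gsd) + μ/2*bb := by
  have hs : (0:ℝ) < 1+A/2 := by linarith
  have key5 : (1+A/2)^2*((1+A/2)*(F1 - F3 - ghpa)) ≤ (1+A/2)^2*(μ/2*ww) := by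
    have e1 : (1+A/2)^2*((1+A/2)*(F1 - F3 - ghpa)) ≤ (1+A/2)*(LF/2*((1+A/2)^2*pa2)) := by
      nlinarith [mul_le_mul_of_nonneg_left hup (by positivity : (0:ℝ) ≤ (1+A/2)^3)]
    have e2 : (1+A/2)*(LF/2*(A^2*ww)) ≤ (1+A/2)^2*(μ/2*ww) := by
      nlinarith [mul_le_mul_of_nonneg_left (mul_le_mul_of_nonneg_right hstep hww) hs.le]
    rw [hPA] at e1
    linarith
  have h5 : (1+A/2)*(F1 - F3 - ghpa) ≤ μ/2*ww :=
    le_of_mul_le_mul_left key5 (by positivity)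
  have h7a : A/2*(μ/2*aa) ≤ A/2*(F3 - F4 - gsa) :=
    mul_le_mul_of_nonneg_left hlow2 (by positivity)
  have h7b : A*(μ/2*aa) ≤ A*(F4 - F3 + gha) :=
    mul_le_mul_of_nonneg_left hlow3 hA.le
  have hres1 : μ/A*ee ≤ μ/A*(A/2*(uu + A*(aa - 2*ac + cc))) :=
    mul_le_mul_of_nonneg_left hres (by positivity)
  have hres2 : μ/A*(A/2*(uu + A*(aa - 2*ac + cc))) = μ/2*uu + A*μ/2*(aa - 2*ac + cc) := by
    field_simp
  have hqa : 0 ≤ A*(μ/4*aa) := mul_nonneg hA.le (mul_nonneg (by linarith) haa)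
  linarith [h5, h7a, h7b, hres1, hres2, hlow1, hyoung, hqa, hbb, hwc, hI1]

/-- **Linear convergence of the inexact IMEX scheme.**
The shifted skew-symmetric solve is performed inexactly with residual `ε_k` satisfying
`‖ε_k‖² ≤ (α_k/2)(‖x̂_{k+1} - x_k‖² + α_k‖y_{k+1} - x̂_{k+1}‖²)`, the steps satisfy
`α_k²L_F ≤ (1 + α_k/2)μ`, and the correction uses `(x_{k+1}+x̂_{k+1})/2`.  Then
`E_{k+1} ≤ (1 + α_k/2)⁻¹E_k` where `E_k = D_F(x_k,x*) + (μ/2)‖y_k - x*‖²`; in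
particular for `α_k = √(μ/L_F)` one gets `E_k ≤ (1 + ½√(μ/L_F))⁻ᵏ E_0`. -/
theorem inexact_imex_linear_convergence
    {n : ℕ} (μ LF : ℝ) (hμ : 0 < μ)
    (F : (Fin n → ℝ) → ℝ) (gradF : (Fin n → ℝ) → (Fin n → ℝ))
    (hdiff : ∀ x, HasFDerivAt F (dpCLM (gradF x)) x)
    (hlower : ∀ x y : Fin n → ℝ,
      μ / 2 * ((x - y) ⬝ᵥ (x - y)) ≤ F x - F y - gradF y ⬝ᵥ (x - y))
    (hupper : ∀ x y : Fin n → ℝ,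
      F x - F y - gradF y ⬝ᵥ (x - y) ≤ LF / 2 * ((x - y) ⬝ᵥ (x - y)))
    (N : Matrix (Fin n) (Fin n) ℝ) (hskew : Nᵀ = -N)
    (xs : Fin n → ℝ) (hxs : gradF xs + N.mulVec xs = 0)
    (α : ℕ → ℝ) (hα : ∀ k, 0 < α k)
    (hαstep : ∀ k, (α k) ^ 2 * LF ≤ (1 + α k / 2) * μ)
    (x y xhat : ℕ → (Fin n → ℝ)) (ε : ℕ → (Fin n → ℝ))
    (hres : ∀ k, ε k ⬝ᵥ ε k ≤ (α k / 2) *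
      ((xhat (k + 1) - x k) ⬝ᵥ (xhat (k + 1) - x k)
        + α k * ((y (k + 1) - xhat (k + 1)) ⬝ᵥ (y (k + 1) - xhat (k + 1)))))
    (hstep1 : ∀ k, xhat (k + 1) - x k = α k • (y k - xhat (k + 1)))
    (hstep2 : ∀ k, y (k + 1) - y k =
      α k • (xhat (k + 1) - y (k + 1)
        - (1 / μ) • (gradF (xhat (k + 1)) + N.mulVec (y (k + 1)))) - ε k)
    (hstep3 : ∀ k, x (k + 1) - x k =
      α k • (y (k + 1) - (1 / 2 : ℝ) • (x (k + 1) + xhat (k + 1)))) :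
    (∀ k,
      (F (x (k + 1)) - F xs - gradF xs ⬝ᵥ (x (k + 1) - xs))
          + μ / 2 * ((y (k + 1) - xs) ⬝ᵥ (y (k + 1) - xs))
        ≤ (1 + α k / 2)⁻¹ *
          ((F (x k) - F xs - gradF xs ⬝ᵥ (x k - xs))
            + μ / 2 * ((y k - xs) ⬝ᵥ (y k - xs)))) ∧
    ((∀ k, α k = Real.sqrt (μ / LF)) → ∀ k,
      (F (x k) - F xs - gradF xs ⬝ᵥ (x k - xs))
          + μ / 2 * ((y k - xs) ⬝ᵥ (y k - xs))
        ≤ ((1 + (1 / 2) * Real.sqrt (μ / LF))⁻¹) ^ k *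
          ((F (x 0) - F xs - gradF xs ⬝ᵥ (x 0 - xs))
            + μ / 2 * ((y 0 - xs) ⬝ᵥ (y 0 - xs)))) := by
  have main : ∀ k,
      (F (x (k + 1)) - F xs - gradF xs ⬝ᵥ (x (k + 1) - xs))
          + μ / 2 * ((y (k + 1) - xs) ⬝ᵥ (y (k + 1) - xs))
        ≤ (1 + α k / 2)⁻¹ *
          ((F (x k) - F xs - gradF xs ⬝ᵥ (x k - xs))
            + μ / 2 * ((y k - xs) ⬝ᵥ (y k - xs))) := by
    intro k
    have hαk := hα k
    have hs : (0:ℝ) < 1 + α k / 2 := by linarith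
    have h1 := hstep1 k
    have h2 := hstep2 k
    have h3 := hstep3 k
    have hup0 := hupper (x (k+1)) (xhat (k+1))
    have hlo1 := hlower (x k) (xhat (k+1))
    have hlo2 := hlower (xhat (k+1)) xs
    have hlo3 := hlower xs (xhat (k+1))
    have hres0 := hres k
    set gs := gradF xs with hgs
    set gh := gradF (xhat (k+1)) with hgh
    set a := xhat (k+1) - xs with ha
    set b := y k - xs with hb
    set c := y (k+1) - xs with hc0
    set d := x k - xs with hd
    set p := x (k+1) - xs with hp
    set e := ε k with he
    have hNxs : N *ᵥ xs = -gs := eq_neg_of_add_eq_zero_right hxs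
    -- basic vector identities
    have hcb : c - b = y (k+1) - y k := by
      rw [hc0, hb]; exact sub_sub_sub_cancel_right _ _ _
    have hpaeq : p - a = x (k+1) - xhat (k+1) := by
      rw [hp, ha]; exact sub_sub_sub_cancel_right _ _ _
    have hda : d - a = x k - xhat (k+1) := by
      rw [hd, ha]; exact sub_sub_sub_cancel_right _ _ _
    have had : a - d = xhat (k+1) - x k := by
      rw [hd, ha]; exact sub_sub_sub_cancel_right _ _ _
    have hca : c - a = y (k+1) - xhat (k+1) := by
      rw [hc0, ha]; exact sub_sub_sub_cancel_right _ _ _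
    have hyy : y (k+1) = c + xs := by rw [hc0]; exact (sub_add_cancel _ _).symm
    -- the main vector relations
    have hpa : (1 + α k / 2) • (p - a) = α k • (c - b) := by
      rw [hpaeq, hcb]
      funext i
      have e1 := congrFun h1 i
      have e3 := congrFun h3 i
      simp only [Pi.sub_apply, Pi.smul_apply, Pi.add_apply, smul_eq_mul] at e1 e3 ⊢
      linear_combination e3 - e1
    have hpa2 : (1 + α k / 2) • (p - a) = (d - a) + α k • (c - a) := by
      rw [hpaeq, hda, hca]
      funext i
      have e3 := congrFun h3 i
      simp only [Pi.sub_apply, Pi.smul_apply, Pi.add_apply, smul_eq_mul] at e3 ⊢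
      linear_combination e3
    have hyc : c - b = α k • (a - c - (1/μ) • ((gh - gs) + N *ᵥ c)) - e := by
      rw [hcb, h2, hyy, Matrix.mulVec_add, hNxs, ha]
      congr 1
      funext i
      simp only [Pi.sub_apply, Pi.smul_apply, Pi.add_apply, Pi.neg_apply, smul_eq_mul]
      ring
    -- scalar facts
    have haa : 0 ≤ a ⬝ᵥ a := dotSelfNonneg a
    have hww : 0 ≤ (c - b) ⬝ᵥ (c - b) := dotSelfNonneg _
    have hbbO : μ/2*(b ⬝ᵥ b) = μ/2*(c ⬝ᵥ c) - μ*((c - b) ⬝ᵥ c) + μ/2*((c - b) ⬝ᵥ (c - b)) := by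
      have h := dotProduct_comm b c
      simp only [sub_dotProduct, dotProduct_sub]
      linear_combination (-(μ/2)) * h
    have hwcO : μ*((c - b) ⬝ᵥ c)
        = α k*μ*(a ⬝ᵥ c) - α k*μ*(c ⬝ᵥ c) - α k*((gh - gs) ⬝ᵥ c) - μ*(e ⬝ᵥ c) := by
      rw [hyc]
      simp only [sub_dotProduct, add_dotProduct, smul_dotProduct,
        smul_eq_mul, skewDotZero N hskew c]
      field_simp
      ring
    have hPAO : (1 + α k/2)^2 * ((p - a) ⬝ᵥ (p - a)) = (α k)^2 * ((c - b) ⬝ᵥ (c - b)) := by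
      have h := congrArg (fun z => z ⬝ᵥ z) hpa
      simp only [smul_dotProduct, dotProduct_smul, smul_eq_mul] at h
      linear_combination h
    have hI1O : (1 + α k/2)*(F (x (k+1)) - F xs - gs ⬝ᵥ p) - (F (x k) - F xs - gs ⬝ᵥ d)
        = (1 + α k/2)*(F (x (k+1)) - F (xhat (k+1)) - gh ⬝ᵥ (p - a))
          - (F (x k) - F (xhat (k+1)) - gh ⬝ᵥ (d - a))
          + (α k/2)*(F (xhat (k+1)) - F xs - gs ⬝ᵥ a)
          + α k*((gh - gs) ⬝ᵥ c) - α k*(gh ⬝ᵥ a - gs ⬝ᵥ a) := by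
      have h1g := congrArg (fun z => gh ⬝ᵥ z) hpa2
      have h2g := congrArg (fun z => gs ⬝ᵥ z) hpa2
      simp only [dotProduct_add, dotProduct_sub, dotProduct_smul,
        smul_eq_mul] at h1g h2g
      simp only [dotProduct_sub, sub_dotProduct]
      linarith [h1g, h2g]
    -- convert the function-value inequalities
    rw [← hpaeq] at hup0
    rw [← hda] at hlo1
    have hnege : xs - xhat (k+1) = -a := by rw [ha, neg_sub]
    rw [hnege] at hlo3
    simp only [neg_dotProduct, dotProduct_neg, neg_neg, sub_neg_eq_add] at hlo3
    -- residual
    rw [← had, ← hca] at hres0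
    have hflip : (a - d) ⬝ᵥ (a - d) = (d - a) ⬝ᵥ (d - a) := by
      have h := dotProduct_comm a d
      simp only [sub_dotProduct, dotProduct_sub]
      linarith [h]
    have hexp : (c - a) ⬝ᵥ (c - a) = a ⬝ᵥ a - 2*(a ⬝ᵥ c) + c ⬝ᵥ c := by
      have h := dotProduct_comm c a
      simp only [sub_dotProduct, dotProduct_sub]
      linarith [h]
    rw [hflip, hexp] at hres0
    -- Young's inequality term
    have hz : 0 ≤ ((α k)⁻¹ • e + (2:ℝ)⁻¹ • c) ⬝ᵥ ((α k)⁻¹ • e + (2:ℝ)⁻¹ • c) :=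
      dotSelfNonneg _
    have hz' : ((α k)⁻¹ • e + (2:ℝ)⁻¹ • c) ⬝ᵥ ((α k)⁻¹ • e + (2:ℝ)⁻¹ • c)
        = (α k)⁻¹*(α k)⁻¹*(e ⬝ᵥ e) + (α k)⁻¹*(e ⬝ᵥ c) + (1/4)*(c ⬝ᵥ c) := by
      have h := dotProduct_comm c e
      simp only [add_dotProduct, dotProduct_add, smul_dotProduct,
        dotProduct_smul, smul_eq_mul]
      linear_combination ((α k)⁻¹ * 2⁻¹) * h
    rw [hz'] at hz
    have hyoungO : 0 ≤ μ/(α k)*(e ⬝ᵥ e) + μ*(e ⬝ᵥ c) + α k*μ/4*(c ⬝ᵥ c) := by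
      have h2' := mul_nonneg (mul_nonneg hμ.le hαk.le) hz
      have heq : (μ*α k)*((α k)⁻¹*(α k)⁻¹*(e ⬝ᵥ e) + (α k)⁻¹*(e ⬝ᵥ c) + (1/4)*(c ⬝ᵥ c))
          = μ/(α k)*(e ⬝ᵥ e) + μ*(e ⬝ᵥ c) + α k*μ/4*(c ⬝ᵥ c) := by
        field_simp
      rw [heq] at h2'
      exact h2'
    -- apply the key scalar lemma
    have key := aux_key μ LF (α k) hμ hαk (hαstep k)
      _ _ _ _ _ _ _ _ _ _ _ _ _ _ _ _ _ _ _ _ _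
      haa hww hbbO hwcO hPAO hI1O hup0 hlo1 hlo2 hlo3 hres0 hyoungO
    rw [inv_mul_eq_div, le_div_iff₀ hs]
    linarith [key]
  refine ⟨main, fun hαc k => ?_⟩
  induction k with
  | zero => simp
  | succ k ih =>
    have hk := main k
    rw [hαc k] at hk
    have hr : (0:ℝ) ≤ (1 + 1/2 * Real.sqrt (μ / LF))⁻¹ := by positivity
    have heq : (1 + Real.sqrt (μ / LF) / 2)⁻¹ = (1 + 1/2 * Real.sqrt (μ / LF))⁻¹ := by
      ring_nf
    rw [heq] at hk
    exact le_trans hk (le_trans (mul_le_mul_of_nonneg_left ih hr) (le_of_eq (by ring)))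
end

section
/- Let F : ℝ^n → ℝ be differentiable with F ∈ S_{μ, L_F}, μ > 0, let N be a real n×n skew-symmetric matrix and B a real n×n matrix with N = B^sym − 2B, B^sym = B + Bᵀ, L_{B^sym} = ‖B^sym‖, and let x* satisfy ∇F(x*) + N x* = 0. Suppose 0 < α ≤ μ/(2L_{B^sym}) and the points x̂_{k+1}, y_{k+1} are generated from (x_k, y_k) by (x̂_{k+1} − x_k)/α = y_k − x̂_{k+1} and (y_{k+1} − y_k)/α = x̂_{k+1} − y_{k+1} − (1/μ)(∇F(x̂_{k+1}) + B^sym y_k − 2B y_{k+1}). Then, with E^{αB}(x,y) = D_F(x,x*) + (1/2)‖y − x*‖²_{μI − αB^sym}, one has E^{αB}(x̂_{k+1}, y_{k+1}) − E^{αB}(x_k, y_k) ≤ −(α/2) E^{αB}(x̂_{k+1}, y_{k+1}) − α⟨∇F(x̂_{k+1}) − ∇F(x*), y_{k+1} − y_k⟩ − (μ/4)‖y_{k+1} − y_k‖². -/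
open Matrix

lemma dp_self_nonneg {n : ℕ} (v : Fin n → ℝ) : 0 ≤ v ⬝ᵥ v :=
  Finset.sum_nonneg fun i _ => mul_self_nonneg _

lemma spec_bound {n : ℕ} (S : Matrix (Fin n) (Fin n) ℝ) (v : Fin n → ℝ) :
    |v ⬝ᵥ S.mulVec v| ≤ specNorm S * (v ⬝ᵥ v) := by
  set v' : EuclideanSpace ℝ (Fin n) := (WithLp.equiv 2 _).symm v with hv'
  have h1 : v ⬝ᵥ S.mulVec v = inner (𝕜 := ℝ) (Matrix.toEuclideanCLM (𝕜 := ℝ) S v') v' := by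
    rw [hv', WithLp.equiv_symm_apply, Matrix.toEuclideanCLM_toLp,
      EuclideanSpace.inner_toLp_toLp, star_trivial]
  have h2 : v ⬝ᵥ v = ‖v'‖ ^ 2 := by
    rw [← real_inner_self_eq_norm_sq]
    rw [hv', WithLp.equiv_symm_apply, EuclideanSpace.inner_toLp_toLp, star_trivial]
  rw [h1, h2]
  calc |inner (𝕜 := ℝ) (Matrix.toEuclideanCLM (𝕜 := ℝ) S v') v'|
      ≤ ‖Matrix.toEuclideanCLM (𝕜 := ℝ) S v'‖ * ‖v'‖ := abs_real_inner_le_norm _ _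
    _ ≤ (specNorm S * ‖v'‖) * ‖v'‖ := by
        gcongr; exact (Matrix.toEuclideanCLM (𝕜 := ℝ) S).le_opNorm v'
    _ = specNorm S * ‖v'‖ ^ 2 := by ring

lemma dp_sym {n : ℕ} {A : Matrix (Fin n) (Fin n) ℝ} (hA : Aᵀ = A) (v w : Fin n → ℝ) :
    v ⬝ᵥ A.mulVec w = w ⬝ᵥ A.mulVec v := by
  calc v ⬝ᵥ A.mulVec w = (A.vecMul v) ⬝ᵥ w := Matrix.dotProduct_mulVec _ _ _
    _ = (Matrix.vecMul v Aᵀ) ⬝ᵥ w := by rw [hA]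
    _ = (A.mulVec v) ⬝ᵥ w := by rw [Matrix.vecMul_transpose]
    _ = w ⬝ᵥ (A.mulVec v) := dotProduct_comm _ _

lemma young_dp {n : ℕ} (u w : Fin n → ℝ) :
    u ⬝ᵥ w ≤ 3/4 * (w ⬝ᵥ w) + 5/8 * (u ⬝ᵥ u) := by
  have h : ∀ i ∈ Finset.univ (α := Fin n),
      u i * w i ≤ 3/4 * (w i * w i) + 5/8 * (u i * u i) := fun i _ => by
    nlinarith [sq_nonneg (u i - 4/5 * w i), sq_nonneg (w i)]
  calc u ⬝ᵥ w = ∑ i, u i * w i := rfl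
    _ ≤ ∑ i, (3/4 * (w i * w i) + 5/8 * (u i * u i)) := Finset.sum_le_sum h
    _ = 3/4 * (w ⬝ᵥ w) + 5/8 * (u ⬝ᵥ u) := by
        simp [dotProduct, Finset.sum_add_distrib, Finset.mul_sum]

set_option maxHeartbeats 2000000 in
/-- **One-step decay of the explicit AGSS scheme.**
For `F ∈ S_{μ,L_F}` (`μ > 0`), `N = Bˢʸᵐ - 2B` skew-symmetric with `Bˢʸᵐ = B + Bᵀ`,
`∇F(x*) + Nx* = 0`, step `0 < α ≤ μ/(2‖Bˢʸᵐ‖)`, and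
`(x̂₊ - x)/α = y - x̂₊`, `(y₊ - y)/α = x̂₊ - y₊ - (1/μ)(∇F(x̂₊) + Bˢʸᵐy - 2By₊)`,
the modified Lyapunov function `E(x,y) = D_F(x,x*) + ½‖y-x*‖²_{μI-αBˢʸᵐ}` satisfies
`E(x̂₊,y₊) - E(x,y) ≤ -(α/2)E(x̂₊,y₊) - α⟨∇F(x̂₊)-∇F(x*), y₊-y⟩ - (μ/4)‖y₊-y‖²`. -/
theorem agss_one_step_decay
    {n : ℕ} (μ LF α : ℝ) (hμ : 0 < μ)
    (F : (Fin n → ℝ) → ℝ) (gradF : (Fin n → ℝ) → (Fin n → ℝ))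
    (hdiff : ∀ x, HasFDerivAt F (dpCLM (gradF x)) x)
    (hlower : ∀ x y : Fin n → ℝ,
      μ / 2 * ((x - y) ⬝ᵥ (x - y)) ≤ F x - F y - gradF y ⬝ᵥ (x - y))
    (hupper : ∀ x y : Fin n → ℝ,
      F x - F y - gradF y ⬝ᵥ (x - y) ≤ LF / 2 * ((x - y) ⬝ᵥ (x - y)))
    (N B : Matrix (Fin n) (Fin n) ℝ)
    (hskew : Nᵀ = -N)
    (hNB : N = (B + Bᵀ) - (2 : ℝ) • B)
    (xs : Fin n → ℝ) (hxs : gradF xs + N.mulVec xs = 0)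
    (hα0 : 0 < α) (hα1 : α ≤ μ / (2 * specNorm (B + Bᵀ)))
    (xk yk xhat yk1 : Fin n → ℝ)
    (hstep1 : xhat - xk = α • (yk - xhat))
    (hstep2 : yk1 - yk =
      α • (xhat - yk1 - (1 / μ) • (gradF xhat + (B + Bᵀ).mulVec yk
        - (2 : ℝ) • B.mulVec yk1))) :
    ((F xhat - F xs - gradF xs ⬝ᵥ (xhat - xs))
        + (1 / 2) * ((yk1 - xs) ⬝ᵥ ((μ • 1 - α • (B + Bᵀ)).mulVec (yk1 - xs))))
      - ((F xk - F xs - gradF xs ⬝ᵥ (xk - xs))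
        + (1 / 2) * ((yk - xs) ⬝ᵥ ((μ • 1 - α • (B + Bᵀ)).mulVec (yk - xs))))
      ≤ -(α / 2 * ((F xhat - F xs - gradF xs ⬝ᵥ (xhat - xs))
            + (1 / 2) * ((yk1 - xs) ⬝ᵥ ((μ • 1 - α • (B + Bᵀ)).mulVec (yk1 - xs)))))
        - α * ((gradF xhat - gradF xs) ⬝ᵥ (yk1 - yk))
        - μ / 4 * ((yk1 - yk) ⬝ᵥ (yk1 - yk)) := by
  have hμ' : μ ≠ 0 := ne_of_gt hμ
  set S : Matrix (Fin n) (Fin n) ℝ := B + Bᵀ with hS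
  set M : Matrix (Fin n) (Fin n) ℝ := μ • 1 - α • S with hM
  set gx : Fin n → ℝ := gradF xhat with hgx
  set gs : Fin n → ℝ := gradF xs with hgsdef
  set u' : Fin n → ℝ := yk1 - xs with hu'
  set u : Fin n → ℝ := yk - xs with hu
  set dta : Fin n → ℝ := yk1 - yk with hdta
  set w : Fin n → ℝ := xhat - xs with hww
  have hSsym : Sᵀ = S := by
    rw [hS, Matrix.transpose_add, Matrix.transpose_transpose, add_comm]
  have hMsym : Mᵀ = M := by
    rw [hM, Matrix.transpose_sub, Matrix.transpose_smul, Matrix.transpose_smul,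
      Matrix.transpose_one, hSsym]
  have hsymS := dp_sym hSsym
  have hsymM := dp_sym hMsym
  have hexp : ∀ v v2 : Fin n → ℝ,
      v ⬝ᵥ M.mulVec v2 = μ * (v ⬝ᵥ v2) - α * (v ⬝ᵥ S.mulVec v2) := by
    intro v v2
    rw [hM]
    simp [Matrix.sub_mulVec, Matrix.smul_mulVec, Matrix.one_mulVec,
      dotProduct_sub, dotProduct_smul, smul_eq_mul]
  have hBB : ∀ v : Fin n → ℝ, v ⬝ᵥ S.mulVec v = 2 * (v ⬝ᵥ B.mulVec v) := by
    intro v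
    rw [hS, Matrix.add_mulVec, dotProduct_add, Matrix.dotProduct_mulVec v Bᵀ v,
      Matrix.vecMul_transpose, dotProduct_comm]
    ring
  -- gradient at xs
  have hgs : gs = B.mulVec xs - Bᵀ.mulVec xs := by
    have h := hxs
    rw [hNB, hS] at h
    funext i
    have h2 := congrFun h i
    simp only [Pi.add_apply, Pi.sub_apply, Pi.zero_apply, Matrix.sub_mulVec,
      Matrix.add_mulVec, Matrix.smul_mulVec, Pi.smul_apply, smul_eq_mul] at h2
    simp only [Pi.sub_apply]
    linarith
  -- the key vector identity from step 2
  have hvec : μ • dta = (α * μ) • (xhat - yk1) - α • (gx - gs)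
      - α • (S.mulVec u) + (2 * α) • (B.mulVec u') := by
    funext i
    have h := congrFun hstep2 i
    simp only [hdta, hu, hu', hS, hgx, hgs, Pi.smul_apply, Pi.sub_apply, Pi.add_apply,
      smul_eq_mul, Matrix.sub_mulVec, Matrix.add_mulVec, Matrix.mulVec_sub] at h ⊢
    field_simp at h
    linear_combination h
  -- Fact I preliminaries
  have hxk : xk - xhat = (-α) • (yk - xhat) := by
    rw [neg_smul, ← hstep1]; abel
  have e1 : (xk - xhat) ⬝ᵥ (xk - xhat) = α^2 * ((yk - xhat) ⬝ᵥ (yk - xhat)) := by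
    rw [hxk]
    simp [smul_dotProduct, dotProduct_smul, smul_eq_mul]
    ring
  have e2 : gx ⬝ᵥ (xk - xhat) = -(α * (gx ⬝ᵥ (yk - xhat))) := by
    rw [hxk]
    simp [dotProduct_smul, smul_eq_mul]
  have hv3 : xk - xs = w + (-α) • (yk - xhat) := by
    rw [hww, ← hxk]; abel
  have e3 : gs ⬝ᵥ (xk - xs) = gs ⬝ᵥ w - α * (gs ⬝ᵥ (yk - xhat)) := by
    rw [hv3]
    simp [dotProduct_add, dotProduct_smul, smul_eq_mul]
    ring
  have hc1 := hlower xk xhat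
  rw [e1, e2] at hc1
  -- hc1 : μ/2 * (α^2 * c) ≤ F xk - F xhat - (-(α * (gx ⬝ᵥ z)))
  have FI : (F xhat - F xs - gs ⬝ᵥ w) - (F xk - F xs - gs ⬝ᵥ (xk - xs))
      ≤ α * (gx ⬝ᵥ (yk - xhat)) - α * (gs ⬝ᵥ (yk - xhat))
        - μ/2 * α^2 * ((yk - xhat) ⬝ᵥ (yk - xhat)) := by
    rw [e3]; nlinarith [hc1]
  -- decomposition of yk - xhat
  have hzv : yk - xhat = u' - dta - w := by rw [hu', hdta, hww]; abel
  have e5 : ∀ g : Fin n → ℝ, g ⬝ᵥ (yk - xhat) = g ⬝ᵥ u' - g ⬝ᵥ dta - g ⬝ᵥ w := by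
    intro g; rw [hzv]; simp [dotProduct_sub]
  -- Fact III : strong convexity at (xs, xhat)
  have hc2 := hlower xs xhat
  have hxsw : xs - xhat = -w := by rw [hww]; abel
  rw [hxsw] at hc2
  simp only [neg_dotProduct, dotProduct_neg, neg_neg] at hc2
  have FIII : (F xhat - F xs - gs ⬝ᵥ w) + μ/2 * (w ⬝ᵥ w) ≤ gx ⬝ᵥ w - gs ⬝ᵥ w := by
    linarith [hc2]
  -- Fact IV : D(xhat) ≥ μ/2 ‖w‖²
  have hc3 := hlower xhat xs
  rw [← hww, ← hgsdef] at hc3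
  -- Fact II pieces
  have hdot := congrArg (fun v => u' ⬝ᵥ v) hvec
  simp only [dotProduct_smul, dotProduct_sub, dotProduct_add,
    smul_eq_mul] at hdot
  have hcomm : u' ⬝ᵥ (gx - gs) = (gx - gs) ⬝ᵥ u' := dotProduct_comm _ _
  have hdu : dta = u' - u := by rw [hdta, hu', hu]; abel
  have hsd : u' ⬝ᵥ S.mulVec dta = u' ⬝ᵥ S.mulVec u' - u' ⬝ᵥ S.mulVec u := by
    rw [hdu, Matrix.mulVec_sub, dotProduct_sub]
  have hBB' := hBB u'
  have hdM : u' ⬝ᵥ M.mulVec dta = μ * (u' ⬝ᵥ dta) - α * (u' ⬝ᵥ S.mulVec dta) := hexp u' dta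
  have hum : u = u' - dta := by rw [hdta, hu', hu]; abel
  have hmm : u ⬝ᵥ M.mulVec u = u' ⬝ᵥ M.mulVec u' - 2 * (u' ⬝ᵥ M.mulVec dta)
      + dta ⬝ᵥ M.mulVec dta := by
    rw [hum]
    simp only [Matrix.mulVec_sub, sub_dotProduct, dotProduct_sub]
    linear_combination hsymM u' dta
  have hcomm2 : (gx - gs) ⬝ᵥ u' = u' ⬝ᵥ gx - u' ⬝ᵥ gs := by
    rw [← hcomm, dotProduct_sub]
  have FII : 1/2 * (u' ⬝ᵥ M.mulVec u') - 1/2 * (u ⬝ᵥ M.mulVec u)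
      = α * μ * (u' ⬝ᵥ xhat - u' ⬝ᵥ yk1) - α * ((gx - gs) ⬝ᵥ u')
        - 1/2 * (dta ⬝ᵥ M.mulVec dta) := by
    linear_combination (-(1/2 : ℝ)) * hmm + hdM + hdot - α * hsd - α * hBB' + α * hcomm2
  have hp' : u' ⬝ᵥ (xhat - yk1) = u' ⬝ᵥ w - u' ⬝ᵥ u' := by
    have : xhat - yk1 = w - u' := by rw [hww, hu']; abel
    rw [this, dotProduct_sub]
  have hp2 : α * μ * (u' ⬝ᵥ xhat - u' ⬝ᵥ yk1) = α * μ * (u' ⬝ᵥ w) - α * μ * (u' ⬝ᵥ u') := by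
    rw [← dotProduct_sub, hp']; ring
  -- spectral facts
  have hαS : α * specNorm S ≤ μ / 2 := by
    have h0 : (0:ℝ) ≤ specNorm S := norm_nonneg _
    rcases h0.eq_or_lt with h | h
    · rw [← h]; simp; linarith
    · have := (le_div_iff₀ (by positivity : (0:ℝ) < 2 * specNorm S)).mp hα1
      nlinarith
  have hq1 := spec_bound S u'
  have hq2 := spec_bound S dta
  have hm'b : u' ⬝ᵥ M.mulVec u' ≤ 3 * μ / 2 * (u' ⬝ᵥ u') := by
    nlinarith [hexp u' u', mul_le_mul_of_nonneg_left (abs_le.mp hq1).1 hα0.le,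
      mul_nonneg (by linarith : (0:ℝ) ≤ μ/2 - α * specNorm S) (dp_self_nonneg u')]
  have hmδ : μ/2 * (dta ⬝ᵥ dta) ≤ dta ⬝ᵥ M.mulVec dta := by
    nlinarith [hexp dta dta, mul_le_mul_of_nonneg_left (abs_le.mp hq2).2 hα0.le,
      mul_nonneg (by linarith : (0:ℝ) ≤ μ/2 - α * specNorm S) (dp_self_nonneg dta)]
  -- Young
  have hY := young_dp u' w
  -- expansion of goal's gradient term
  have eG : (gx - gs) ⬝ᵥ dta = gx ⬝ᵥ dta - gs ⬝ᵥ dta := sub_dotProduct _ _ _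
  have eG' : (gx - gs) ⬝ᵥ u' = gx ⬝ᵥ u' - gs ⬝ᵥ u' := sub_dotProduct _ _ _
  have eGw : (gx - gs) ⬝ᵥ w = gx ⬝ᵥ w - gs ⬝ᵥ w := sub_dotProduct _ _ _
  have e5xA : α * (gx ⬝ᵥ (yk - xhat))
      = α * (gx ⬝ᵥ u') - α * (gx ⬝ᵥ dta) - α * (gx ⬝ᵥ w) := by
    rw [e5 gx]; ring
  have e5sA : α * (gs ⬝ᵥ (yk - xhat))
      = α * (gs ⬝ᵥ u') - α * (gs ⬝ᵥ dta) - α * (gs ⬝ᵥ w) := by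
    rw [e5 gs]; ring
  have eGA : α * ((gx - gs) ⬝ᵥ dta) = α * (gx ⬝ᵥ dta) - α * (gs ⬝ᵥ dta) := by
    rw [eG]; ring
  have eG'A : α * ((gx - gs) ⬝ᵥ u') = α * (gx ⬝ᵥ u') - α * (gs ⬝ᵥ u') := by
    rw [eG']; ring
  -- final assembly
  linarith [FI, FII, hp2, hmδ, hc3, e3, dp_self_nonneg (yk - xhat),
    mul_le_mul_of_nonneg_left FIII hα0.le,
    mul_le_mul_of_nonneg_left hc3 hα0.le,
    mul_le_mul_of_nonneg_left hm'b hα0.le,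
    mul_le_mul_of_nonneg_left hY (mul_nonneg hα0.le hμ.le),
    mul_nonneg (mul_nonneg hμ.le (sq_nonneg α)) (dp_self_nonneg (yk - xhat)),
    e5xA, e5sA, eGA, eG'A]
end
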